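/- In the three-node model with pooled least-squares coefficients beta^{CS} = (beta_S^{CS}, beta_Z^{CS}) computed from D training tasks with coefficients gamma^1,...,gamma^D, if the test coefficient gamma^T has mean zero and variance Sigma^2 > 0, then the expected test error satisfies E_{gamma^T}[E_{P^T}((Y - (beta^{CS})^t X)^2)] >= sigma^2, with sigma^2 being the test error of the invariant predictor (alpha, 0). Equivalently, E_{gamma^T}[risk(beta^{CS})] - sigma^2 = (beta_Z^{CS})^2 (V_Y Sigma^2 + sigma_eta^2) + (gbar^2/D^2)(beta_Z^{CS})^2 alpha^t diag(sigma_X^2) alpha >= 0. -/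

import Mathlib

open MeasureTheory ProbabilityTheory Real Filter Topology intervalIntegral
open scoped NNReal ENNReal

namespace Stmt9Aux

lemma integrable_sq_mul_exp {b : ℝ} (hb : 0 < b) :
    Integrable (fun x : ℝ => x ^ 2 * rexp (-b * x ^ 2)) := by
  have h := integrable_rpow_mul_exp_neg_mul_sq hb (by norm_num : (-1 : ℝ) < 2)
  simpa [Real.rpow_two] using h

lemma integral_sq_mul_exp {b : ℝ} (hb : 0 < b) :
    ∫ x : ℝ, x ^ 2 * rexp (-b * x ^ 2) = Real.sqrt (π / b) / (2 * b) := by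
  set g : ℝ → ℝ := fun x => x * rexp (-b * x ^ 2) with hg
  set g' : ℝ → ℝ := fun x => rexp (-b * x ^ 2) - 2 * b * (x ^ 2 * rexp (-b * x ^ 2)) with hg'
  have hderiv : ∀ x : ℝ, HasDerivAt g (g' x) x := by
    intro x
    have h1 : HasDerivAt (fun y : ℝ => -b * y ^ 2) (-b * (2 * x)) x := by
      simpa using (hasDerivAt_pow 2 x).const_mul (-b)
    have h3 := (hasDerivAt_id x).mul h1.exp
    exact h3.congr_deriv (by
      show _ = rexp (-b * x ^ 2) - 2 * b * (x ^ 2 * rexp (-b * x ^ 2))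
      simp only [id_eq]
      ring)
  have hint' : Integrable g' :=
    (integrable_exp_neg_mul_sq hb).sub ((integrable_sq_mul_exp hb).const_mul (2 * b))
  have htop : Tendsto g atTop (𝓝 0) := by
    have h := (rpow_mul_exp_neg_mul_sq_isLittleO_exp_neg hb 1).isBigO
    have h2 : Tendsto (fun x : ℝ => rexp (-(1 / 2) * x)) atTop (𝓝 0) := by
      have hlin : Tendsto (fun x : ℝ => -(1/2) * x) atTop atBot :=
        tendsto_id.const_mul_atTop_of_neg (by norm_num)
      exact tendsto_exp_atBot.comp hlin
    have h3 := h.trans_tendsto h2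
    have : (fun x : ℝ => x ^ (1 : ℝ) * rexp (-b * x ^ 2)) =ᶠ[atTop] g := by
      filter_upwards [eventually_gt_atTop (0:ℝ)] with x hx
      rw [Real.rpow_one]
    exact (h3.congr' this)
  have hbot : Tendsto g atBot (𝓝 0) := by
    have hcomp := htop.comp tendsto_neg_atBot_atTop
    have heq : (g ∘ fun x : ℝ => -x) = fun x => -g x := by
      funext x; simp only [hg, Function.comp_apply, neg_sq]; ring
    rw [heq] at hcomp
    simpa using hcomp.neg
  have hIoi : ∫ x in Set.Ioi (0:ℝ), g' x = 0 - g 0 :=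
    integral_Ioi_of_hasDerivAt_of_tendsto' (fun x _ => hderiv x) hint'.integrableOn htop
  have hIic : ∫ x in Set.Iic (0:ℝ), g' x = g 0 - 0 :=
    integral_Iic_of_hasDerivAt_of_tendsto' (fun x _ => hderiv x) hint'.integrableOn hbot
  have hsplit : (∫ x in Set.Iic (0:ℝ), g' x) + ∫ x in Set.Ioi (0:ℝ), g' x = ∫ x, g' x :=
    integral_Iic_add_Ioi hint'.integrableOn hint'.integrableOn
  have htot : ∫ x, g' x = 0 := by rw [← hsplit, hIoi, hIic]; ring
  have hsub : ∫ x, g' x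
      = (∫ x, rexp (-b * x ^ 2)) - 2 * b * ∫ x, x ^ 2 * rexp (-b * x ^ 2) := by
    simp only [hg']
    rw [integral_sub (integrable_exp_neg_mul_sq hb)
      ((integrable_sq_mul_exp hb).const_mul (2 * b)), MeasureTheory.integral_const_mul]
  rw [htot, integral_gaussian] at hsub
  have h2b : (2 * b) ≠ 0 := by positivity
  field_simp at hsub ⊢
  linarith

lemma pdfReal_eq (v : ℝ≥0) (x : ℝ) :
    gaussianPDFReal 0 v x
      = (Real.sqrt (2 * π * v))⁻¹ * rexp (-(2 * (v:ℝ))⁻¹ * x ^ 2) := by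
  rw [gaussianPDFReal]
  congr 1
  ring

lemma integral_id_gauss (v : ℝ≥0) : ∫ x, x ∂gaussianReal 0 v = 0 := by
  have hone : (⟨(-1:ℝ)^2, sq_nonneg _⟩ : ℝ≥0) = 1 := by ext; norm_num
  have hmap : (gaussianReal 0 v).map (fun x => (-1:ℝ) * x) = gaussianReal 0 v := by
    have h := gaussianReal_map_const_mul (μ := 0) (v := v) (-1)
    rw [mul_zero] at h
    convert h using 2
    ext
    norm_num
  have hmeas : Measurable (fun x : ℝ => (-1:ℝ) * x) := measurable_id.const_mul _
  have h2 : ∫ x, x ∂gaussianReal 0 v = ∫ x, (-1:ℝ) * x ∂gaussianReal 0 v := by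
    conv_lhs => rw [← hmap]
    exact integral_map hmeas.aemeasurable aestronglyMeasurable_id
  have h3 : ∫ x, (-1:ℝ) * x ∂gaussianReal 0 v = - ∫ x, x ∂gaussianReal 0 v := by
    rw [show (fun x : ℝ => (-1:ℝ) * x) = fun x : ℝ => -x from by funext x; ring]
    exact MeasureTheory.integral_neg _
  linarith [h2.trans h3]

lemma integrable_dirac_real {f : ℝ → ℝ} (a : ℝ) : Integrable f (Measure.dirac a) :=
  (integrable_const (f a)).congr (ae_eq_dirac f).symm

lemma integrable_id_gauss (v : ℝ≥0) : Integrable (fun x : ℝ => x) (gaussianReal 0 v) := by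
  by_cases hv : v = 0
  · subst hv; rw [gaussianReal_zero_var]; exact integrable_dirac_real 0
  · have hvpos : (0:ℝ) < v := by positivity
    have hbpos : (0:ℝ) < (2 * (v:ℝ))⁻¹ := by positivity
    rw [gaussianReal_of_var_ne_zero 0 hv,
        integrable_withDensity_iff (measurable_gaussianPDF 0 v)
          (ae_of_all _ fun x => ENNReal.ofReal_lt_top)]
    have heq : (fun x : ℝ => x * (gaussianPDF 0 v x).toReal)
        = fun x => (Real.sqrt (2 * π * v))⁻¹ * (x * rexp (-(2 * (v:ℝ))⁻¹ * x ^ 2)) := by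
      funext x
      rw [gaussianPDF, ENNReal.toReal_ofReal (gaussianPDFReal_nonneg 0 v x), pdfReal_eq]
      ring
    rw [heq]
    exact (integrable_mul_exp_neg_mul_sq hbpos).const_mul _

lemma integrable_sq_gauss (v : ℝ≥0) :
    Integrable (fun x : ℝ => x ^ 2) (gaussianReal 0 v) := by
  by_cases hv : v = 0
  · subst hv; rw [gaussianReal_zero_var]; exact integrable_dirac_real 0
  · have hvpos : (0:ℝ) < v := by positivity
    have hbpos : (0:ℝ) < (2 * (v:ℝ))⁻¹ := by positivity
    rw [gaussianReal_of_var_ne_zero 0 hv,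
        integrable_withDensity_iff (measurable_gaussianPDF 0 v)
          (ae_of_all _ fun x => ENNReal.ofReal_lt_top)]
    have heq : (fun x : ℝ => x ^ 2 * (gaussianPDF 0 v x).toReal)
        = fun x => (Real.sqrt (2 * π * v))⁻¹ * (x ^ 2 * rexp (-(2 * (v:ℝ))⁻¹ * x ^ 2)) := by
      funext x
      rw [gaussianPDF, ENNReal.toReal_ofReal (gaussianPDFReal_nonneg 0 v x), pdfReal_eq]
      ring
    rw [heq]
    exact (integrable_sq_mul_exp hbpos).const_mul _

lemma integral_sq_gauss (v : ℝ≥0) : ∫ x, x ^ 2 ∂gaussianReal 0 v = v := by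
  by_cases hv : v = 0
  · subst hv; simp [gaussianReal_zero_var]
  · have hvpos : (0:ℝ) < v := by positivity
    set b : ℝ := (2 * (v:ℝ))⁻¹ with hbdef
    have hbpos : (0:ℝ) < b := by positivity
    rw [gaussianReal_of_var_ne_zero 0 hv]
    have hpdf : gaussianPDF 0 v
        = fun x => ((Real.toNNReal (gaussianPDFReal 0 v x) : ℝ≥0) : ℝ≥0∞) := rfl
    rw [hpdf, integral_withDensity_eq_integral_smul
      ((measurable_gaussianPDFReal 0 v).real_toNNReal) (fun x => x ^ 2)]
    have heq : ∀ x : ℝ, (Real.toNNReal (gaussianPDFReal 0 v x)) • (x ^ 2)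
        = (Real.sqrt (2 * π * v))⁻¹ * (x ^ 2 * rexp (-b * x ^ 2)) := by
      intro x
      rw [NNReal.smul_def, smul_eq_mul, Real.coe_toNNReal _ (gaussianPDFReal_nonneg 0 v x),
        pdfReal_eq]
      ring
    simp_rw [heq]
    rw [MeasureTheory.integral_const_mul, integral_sq_mul_exp hbpos]
    have h1 : π / b = 2 * π * v := by rw [hbdef]; field_simp
    have h2 : 2 * b = (v:ℝ)⁻¹ := by rw [hbdef]; field_simp
    rw [h1, h2]
    have h3 : Real.sqrt (2 * π * v) ≠ 0 := by positivity
    rw [div_eq_mul_inv, inv_inv, ← mul_assoc, inv_mul_cancel₀ h3, one_mul]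

variable {Ω : Type*} [MeasureSpace Ω]

lemma rv_int1 {X : Ω → ℝ} (hXm : Measurable X) {v : ℝ≥0}
    (h : Measure.map X ℙ = gaussianReal 0 v) : Integrable X ℙ := by
  have h1 : Integrable (fun x : ℝ => x) (Measure.map X ℙ) := by
    rw [h]; exact integrable_id_gauss v
  have := (integrable_map_measure aestronglyMeasurable_id hXm.aemeasurable).mp h1
  simpa [Function.comp] using this

lemma rv_int2 {X : Ω → ℝ} (hXm : Measurable X) {v : ℝ≥0}
    (h : Measure.map X ℙ = gaussianReal 0 v) : Integrable (fun ω => X ω ^ 2) ℙ := by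
  have h1 : Integrable (fun x : ℝ => x ^ 2) (Measure.map X ℙ) := by
    rw [h]; exact integrable_sq_gauss v
  have := (integrable_map_measure
    (measurable_id.pow_const 2).aestronglyMeasurable hXm.aemeasurable).mp h1
  exact this

lemma rv_mean {X : Ω → ℝ} (hXm : Measurable X) {v : ℝ≥0}
    (h : Measure.map X ℙ = gaussianReal 0 v) : ∫ ω, X ω ∂ℙ = 0 := by
  have := integral_map (μ := ℙ) hXm.aemeasurable (f := fun x : ℝ => x) aestronglyMeasurable_id
  rw [← this, h]
  exact integral_id_gauss v

lemma rv_var {X : Ω → ℝ} (hXm : Measurable X) {v : ℝ≥0}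
    (h : Measure.map X ℙ = gaussianReal 0 v) : ∫ ω, X ω ^ 2 ∂ℙ = v := by
  have := integral_map (μ := ℙ) hXm.aemeasurable
    (f := fun x : ℝ => x ^ 2) (measurable_id.pow_const 2).aestronglyMeasurable
  rw [← this, h]
  exact integral_sq_gauss v

end Stmt9Aux


open Stmt9Aux

/-- With the pooled least-squares coefficients `β^{CS}` computed from `D` training tasks with
coefficients `γ^1, …, γ^D`, if the test coefficient `γ^T` has mean zero and variance `Σ² > 0`,
the expected (over `γ^T`) test error satisfies
`E[risk(β^{CS})] - σ² = (β_Z^{CS})² (V_Y Σ² + σ_η²) + (ḡ²/D²) (β_Z^{CS})² αᵗ diag(σ_X²) α ≥ 0`,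
hence `E[risk(β^{CS})] ≥ σ²`, the test error of the invariant predictor `(α, 0)`. -/
theorem stmt_9
    {s D : ℕ} (hD : 0 < D)
    {Ω : Type*} [MeasureSpace Ω] [IsProbabilityMeasure (ℙ : Measure Ω)]
    (α : Fin s → ℝ) (σ2 σeta2 : NNReal) (sX2 : Fin s → NNReal) (γ : Fin D → ℝ)
    -- test-task variables (the task parameter γ^T enters through `Z = t·Y + η`)
    (XS : Ω → Fin s → ℝ) (eps eta : Ω → ℝ)
    (hXm : Measurable XS) (hepsm : Measurable eps) (hetam : Measurable eta)
    (hXgauss : ∀ i, Measure.map (fun ω => XS ω i) ℙ = gaussianReal 0 (sX2 i))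
    (hepsgauss : Measure.map eps ℙ = gaussianReal 0 σ2)
    (hetagauss : Measure.map eta ℙ = gaussianReal 0 σeta2)
    (hindep : iIndepFun
      (Sum.elim (fun i (ω : Ω) => XS ω i)
        (fun b (ω : Ω) => if b then eps ω else eta ω) : (Fin s ⊕ Bool) → Ω → ℝ) ℙ)
    (Y : Ω → ℝ) (hY : Y = fun ω => (∑ i, α i * XS ω i) + eps ω)
    -- model quantities and pooled least-squares coefficients
    (A VY gbar g2bar bZ : ℝ) (bS : Fin s → ℝ)
    (hA : A = ∑ i, α i ^ 2 * (sX2 i : ℝ))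
    (hVY : VY = A + (σ2 : ℝ))
    (hgbar : gbar = ∑ k, γ k) (hg2bar : g2bar = ∑ k, γ k ^ 2)
    (hbZ : bZ = gbar * (σ2 : ℝ) /
      (VY ^ 2 * g2bar + (D : ℝ) * (σeta2 : ℝ) - gbar ^ 2 / (D : ℝ) * A))
    (hbS : bS = fun i => (1 - gbar / (D : ℝ) * bZ) * α i)
    -- the law of the random test coefficient γ^T : mean zero, variance Σ² > 0
    (ν : Measure ℝ) [IsProbabilityMeasure ν] (Ssq : ℝ) (hSpos : 0 < Ssq)
    (hmean : ∫ t, t ∂ν = 0) (hvar : ∫ t, t ^ 2 ∂ν = Ssq)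
    -- test risk of the pooled predictor as a function of γ^T
    (risk : ℝ → ℝ)
    (hrisk : risk = fun t =>
      ∫ ω, (Y ω - (∑ i, bS i * XS ω i) - bZ * (t * Y ω + eta ω)) ^ 2 ∂ℙ) :
    (σ2 : ℝ) ≤ ∫ t, risk t ∂ν ∧
      (∫ t, risk t ∂ν) - (σ2 : ℝ) =
        bZ ^ 2 * (VY * Ssq + (σeta2 : ℝ)) + gbar ^ 2 / (D : ℝ) ^ 2 * bZ ^ 2 * A := by
  have hDne : (D : ℝ) ≠ 0 := Nat.cast_ne_zero.mpr hD.ne'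
  set F : (Fin s ⊕ Bool) → Ω → ℝ := Sum.elim (fun i (ω : Ω) => XS ω i)
      (fun b (ω : Ω) => if b then eps ω else eta ω) with hF
  set V : (Fin s ⊕ Bool) → ℝ≥0 := Sum.elim sX2 (fun b => if b then σ2 else σeta2) with hV
  have hFm : ∀ u, Measurable (F u) := by
    rintro (i | b)
    · exact (measurable_pi_apply i).comp hXm
    · cases b
      · simpa [hF] using hetam
      · simpa [hF] using hepsm
  have hFg : ∀ u, Measure.map (F u) ℙ = gaussianReal 0 (V u) := by
    rintro (i | b)
    · simpa [hF, hV] using hXgauss i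
    · cases b
      · simpa [hF, hV] using hetagauss
      · simpa [hF, hV] using hepsgauss
  have hInt1 : ∀ u, Integrable (F u) ℙ := fun u => rv_int1 (hFm u) (hFg u)
  have hInt2 : ∀ u, Integrable (fun ω => F u ω ^ 2) ℙ := fun u => rv_int2 (hFm u) (hFg u)
  have hMean : ∀ u, ∫ ω, F u ω ∂ℙ = 0 := fun u => rv_mean (hFm u) (hFg u)
  have hVar : ∀ u, ∫ ω, F u ω ^ 2 ∂ℙ = (V u : ℝ) := fun u => rv_var (hFm u) (hFg u)
  have key : ∀ c : (Fin s ⊕ Bool) → ℝ,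
      ∫ ω, (∑ u, c u * F u ω) ^ 2 ∂ℙ = ∑ u, c u ^ 2 * (V u : ℝ) := by
    intro c
    have hprod : ∀ u u' : Fin s ⊕ Bool,
        Integrable (fun ω => (c u * F u ω) * (c u' * F u' ω)) ℙ := by
      intro u u'
      rcases eq_or_ne u u' with rfl | hne
      · have h := (hInt2 u).const_mul (c u ^ 2)
        have heq : (fun ω => (c u * F u ω) * (c u * F u ω))
            = fun ω => c u ^ 2 * F u ω ^ 2 := by funext ω; ring
        rw [heq]; exact h
      · have hind := hindep.indepFun hne
        have hmul := hind.integrable_mul (hInt1 u) (hInt1 u')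
        have heq : (fun ω => (c u * F u ω) * (c u' * F u' ω))
            = fun ω => (c u * c u') * (F u ω * F u' ω) := by funext ω; ring
        rw [heq]
        exact Integrable.const_mul hmul _
    calc ∫ ω, (∑ u, c u * F u ω) ^ 2 ∂ℙ
        = ∫ ω, ∑ u, ∑ u', (c u * F u ω) * (c u' * F u' ω) ∂ℙ := by
          congr 1; funext ω; rw [sq, Finset.sum_mul_sum]
      _ = ∑ u, ∑ u', ∫ ω, (c u * F u ω) * (c u' * F u' ω) ∂ℙ := by
          rw [integral_finset_sum _
            (fun u _ => integrable_finset_sum _ (fun u' _ => hprod u u'))]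
          exact Finset.sum_congr rfl fun u _ =>
            integral_finset_sum _ (fun u' _ => hprod u u')
      _ = ∑ u, c u ^ 2 * (V u : ℝ) := by
          refine Finset.sum_congr rfl fun u _ => ?_
          rw [Finset.sum_eq_single u]
          · have heq : (fun ω => (c u * F u ω) * (c u * F u ω))
                = fun ω => c u ^ 2 * F u ω ^ 2 := by funext ω; ring
            rw [heq, MeasureTheory.integral_const_mul, hVar u]
          · intro u' _ hne
            have hind := hindep.indepFun (Ne.symm hne)
            have heq : (fun ω => (c u * F u ω) * (c u' * F u' ω))
                = fun ω => (c u * c u') * (F u ω * F u' ω) := by funext ω; ring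
            rw [heq, MeasureTheory.integral_const_mul]
            have hmul0 : ∫ ω, F u ω * F u' ω ∂ℙ = 0 := by
              have h := hind.integral_mul_eq_mul_integral (hFm u).aestronglyMeasurable
                (hFm u').aestronglyMeasurable
              calc ∫ ω, F u ω * F u' ω ∂ℙ = ∫ ω, (F u * F u') ω ∂ℙ := rfl
                _ = (∫ ω, F u ω ∂ℙ) * ∫ ω, F u' ω ∂ℙ := h
                _ = 0 := by rw [hMean u, hMean u']; ring
            rw [hmul0, mul_zero]
          · intro h; exact absurd (Finset.mem_univ u) h
  have hA0 : 0 ≤ A := by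
    rw [hA]; exact Finset.sum_nonneg fun i _ => by positivity
  set cc : ℝ := gbar / (D : ℝ) * bZ with hcc
  have hriskval : ∀ t : ℝ, risk t
      = (cc - bZ * t) ^ 2 * A + (1 - bZ * t) ^ 2 * (σ2 : ℝ) + bZ ^ 2 * (σeta2 : ℝ) := by
    intro t
    set c : (Fin s ⊕ Bool) → ℝ := Sum.elim (fun i => (cc - bZ * t) * α i)
      (fun b => if b then (1 - bZ * t) else -bZ) with hc
    have hpoint : ∀ ω, Y ω - (∑ i, bS i * XS ω i) - bZ * (t * Y ω + eta ω)
        = ∑ u, c u * F u ω := by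
      intro ω
      have hS : ∑ i, bS i * XS ω i = (1 - cc) * ∑ i, α i * XS ω i := by
        simp only [hbS, Finset.mul_sum]
        exact Finset.sum_congr rfl fun i _ => by rw [hcc]; ring
      have hRS : ∑ u, c u * F u ω
          = (cc - bZ * t) * (∑ i, α i * XS ω i)
            + ((1 - bZ * t) * eps ω + (-bZ) * eta ω) := by
        rw [Fintype.sum_sum_type]
        congr 1
        · rw [Finset.mul_sum]
          exact Finset.sum_congr rfl fun i _ => by
            simp only [hc, hF, Sum.elim_inl]; ring
        · simp [hc, hF, Fintype.sum_bool]
      simp only [hY]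
      rw [hS, hRS]
      ring
    simp only [hrisk]
    have hcong : ∫ ω, (Y ω - (∑ i, bS i * XS ω i) - bZ * (t * Y ω + eta ω)) ^ 2 ∂ℙ
        = ∫ ω, (∑ u, c u * F u ω) ^ 2 ∂ℙ := by
      congr 1; funext ω; rw [hpoint ω]
    rw [hcong, key c, Fintype.sum_sum_type]
    have hsum : ∑ i, c (Sum.inl i) ^ 2 * ((V (Sum.inl i) : ℝ))
        = (cc - bZ * t) ^ 2 * A := by
      rw [hA, Finset.mul_sum]
      exact Finset.sum_congr rfl fun i _ => by
        simp only [hc, hV, Sum.elim_inl]; ring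
    rw [hsum]
    simp only [hc, hV, Fintype.sum_bool, Sum.elim_inr, Bool.false_eq_true, if_true, if_false]
    ring
  have hsqint : Integrable (fun t : ℝ => t ^ 2) ν := by
    by_contra hcon
    rw [integral_undef hcon] at hvar
    linarith
  have htint : Integrable (fun t : ℝ => t) ν := by
    refine Integrable.mono' ((integrable_const (1 : ℝ)).add hsqint)
      aestronglyMeasurable_id (ae_of_all _ fun t => ?_)
    simp only [Real.norm_eq_abs, Pi.add_apply, id_eq]
    nlinarith [sq_nonneg (|t| - 1), abs_nonneg t, sq_abs t]
  have hriskfun : risk = fun t =>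
      ((cc ^ 2 * A + (σ2 : ℝ) + bZ ^ 2 * (σeta2 : ℝ))
        + (-2 * bZ * (cc * A + (σ2 : ℝ))) * t) + (bZ ^ 2 * (A + (σ2 : ℝ))) * t ^ 2 := by
    funext t; rw [hriskval t]; ring
  have hintegral : ∫ t, risk t ∂ν
      = (cc ^ 2 * A + (σ2 : ℝ) + bZ ^ 2 * (σeta2 : ℝ)) + (bZ ^ 2 * (A + (σ2 : ℝ))) * Ssq := by
    have i0 : Integrable (fun t : ℝ => (-2 * bZ * (cc * A + (σ2 : ℝ))) * t) ν :=
      htint.const_mul _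
    have i1 : Integrable (fun t : ℝ => (cc ^ 2 * A + (σ2 : ℝ) + bZ ^ 2 * (σeta2 : ℝ))
        + (-2 * bZ * (cc * A + (σ2 : ℝ))) * t) ν := (integrable_const _).add i0
    have i2 : Integrable (fun t : ℝ => (bZ ^ 2 * (A + (σ2 : ℝ))) * t ^ 2) ν :=
      hsqint.const_mul _
    rw [hriskfun]
    rw [integral_add i1 i2, integral_add (integrable_const _) i0,
      MeasureTheory.integral_const_mul, MeasureTheory.integral_const_mul, hmean, hvar, MeasureTheory.integral_const]
    simp [measure_univ]
  have hdiff : (∫ t, risk t ∂ν) - (σ2 : ℝ)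
      = bZ ^ 2 * (VY * Ssq + (σeta2 : ℝ)) + gbar ^ 2 / (D : ℝ) ^ 2 * bZ ^ 2 * A := by
    rw [hintegral, hVY, hcc]
    field_simp
    ring
  refine ⟨?_, hdiff⟩
  have h1 : 0 ≤ VY := by
    rw [hVY]
    have := σ2.coe_nonneg
    linarith
  have h2 : 0 ≤ VY * Ssq + (σeta2 : ℝ) :=
    add_nonneg (mul_nonneg h1 hSpos.le) σeta2.coe_nonneg
  have h3 : 0 ≤ bZ ^ 2 * (VY * Ssq + (σeta2 : ℝ)) := mul_nonneg (sq_nonneg _) h2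
  have h4 : 0 ≤ gbar ^ 2 / (D : ℝ) ^ 2 * bZ ^ 2 * A :=
    mul_nonneg (mul_nonneg (div_nonneg (sq_nonneg _) (sq_nonneg _)) (sq_nonneg _)) hA0
  linarith
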